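/- arXiv:2103.10752 — 5 statements merged into one kernel-verified Lean document; each statement's English description precedes it below -/
import Mathlib

section
/- Let S be a nonempty finite type, P : Matrix S S ℝ a column-stochastic matrix, γ ∈ (0,1), and p₀ : S → ℝ. Let F := ∑_{t=0}^∞ γ^t (P^t).mulVec p₀ and let A f := p₀ + γ • P.mulVec f be the forward Bellman operator. Then for every f : S → ℝ and every L ∈ ℕ, ∑_i |F i − (A^[L] f) i| ≤ γ^L · ∑_i |F i − f i|; in particular A^[L] f converges to F as L → ∞, for arbitrary initial function f. -/
/-- Iterating the forward Bellman operator from an arbitrary initial function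
converges geometrically (in ℓ1) to the frequency function `F = ∑_t γ^t Pᵗ p₀`. -/
theorem forward_bellman_iterates_converge
    {S : Type*} [Fintype S] [Nonempty S] [DecidableEq S]
    (P : Matrix S S ℝ) (hP0 : ∀ i j, 0 ≤ P i j) (hP1 : ∀ j, ∑ i, P i j = 1)
    (γ : ℝ) (hγ : γ ∈ Set.Ioo (0 : ℝ) 1) (p₀ : S → ℝ)
    (F : S → ℝ) (hF : HasSum (fun t : ℕ => γ ^ t • (P ^ t).mulVec p₀) F)
    (A : (S → ℝ) → (S → ℝ)) (hA : ∀ f, A f = p₀ + γ • P.mulVec f) :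
    ∀ f : S → ℝ,
      (∀ L : ℕ, ∑ i, |F i - (A^[L] f) i| ≤ γ ^ L * ∑ i, |F i - f i|) ∧
      Filter.Tendsto (fun L : ℕ => A^[L] f) Filter.atTop (nhds F) := by
  obtain ⟨hγ0, hγ1⟩ := hγ
  -- F is a fixed point of A
  have hfix : A F = F := by
    set T : (S → ℝ) →L[ℝ] (S → ℝ) :=
      LinearMap.toContinuousLinearMap (γ • Matrix.mulVecLin P) with hT
    have hTapp : ∀ v, T v = γ • P.mulVec v := fun v => rfl
    have h1 : HasSum (fun t : ℕ => T (γ ^ t • (P ^ t).mulVec p₀)) (T F) := T.hasSum hF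
    have h2 : ∀ t : ℕ, T (γ ^ t • (P ^ t).mulVec p₀)
        = γ ^ (t + 1) • (P ^ (t + 1)).mulVec p₀ := by
      intro t
      simp [hTapp, Matrix.mulVec_smul, smul_smul, Matrix.mulVec_mulVec, pow_succ']
    have h3 : HasSum (fun t : ℕ => γ ^ (t + 1) • (P ^ (t + 1)).mulVec p₀) (T F) := by
      simpa [h2] using h1
    have h4 : HasSum (fun t : ℕ => γ ^ t • (P ^ t).mulVec p₀)
        (T F + ∑ t ∈ Finset.range 1, γ ^ t • (P ^ t).mulVec p₀) :=
      (hasSum_nat_add_iff 1).mp h3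
    have h5 : F = T F + p₀ := by
      have := hF.unique h4
      simpa [Matrix.one_mulVec] using this
    rw [hA]
    rw [← hTapp, add_comm]
    exact h5.symm
  -- one-step contraction in ℓ1
  have contr : ∀ g : S → ℝ, ∑ i, |F i - A g i| ≤ γ * ∑ i, |F i - g i| := by
    intro g
    have hdiff : ∀ i, F i - A g i = γ * ∑ j, P i j * (F j - g j) := by
      intro i
      conv_lhs => rw [← hfix]
      simp only [hA, Pi.add_apply, Pi.smul_apply, Matrix.mulVec, dotProduct,
        smul_eq_mul]
      simp only [mul_sub, Finset.mul_sum, Finset.sum_sub_distrib]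
      ring
    calc ∑ i, |F i - A g i| = ∑ i, γ * |∑ j, P i j * (F j - g j)| := by
          refine Finset.sum_congr rfl fun i _ => ?_
          rw [hdiff i, abs_mul, abs_of_pos hγ0]
      _ ≤ ∑ i, γ * ∑ j, P i j * |F j - g j| := by
          refine Finset.sum_le_sum fun i _ => ?_
          refine mul_le_mul_of_nonneg_left ?_ hγ0.le
          refine (Finset.abs_sum_le_sum_abs _ _).trans ?_
          refine Finset.sum_le_sum fun j _ => ?_
          rw [abs_mul, abs_of_nonneg (hP0 i j)]
      _ = γ * ∑ j, (∑ i, P i j) * |F j - g j| := by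
          rw [← Finset.mul_sum, Finset.sum_comm]
          simp_rw [Finset.sum_mul]
      _ = γ * ∑ j, |F j - g j| := by simp [hP1]
  intro f
  have bound : ∀ L : ℕ, ∑ i, |F i - (A^[L] f) i| ≤ γ ^ L * ∑ i, |F i - f i| := by
    intro L
    induction L with
    | zero => simp
    | succ L ih =>
      rw [Function.iterate_succ_apply']
      calc ∑ i, |F i - A (A^[L] f) i| ≤ γ * ∑ i, |F i - (A^[L] f) i| := contr _
        _ ≤ γ * (γ ^ L * ∑ i, |F i - f i|) := by
            exact mul_le_mul_of_nonneg_left ih hγ0.le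
        _ = γ ^ (L + 1) * ∑ i, |F i - f i| := by ring
  refine ⟨bound, ?_⟩
  rw [tendsto_pi_nhds]
  intro i
  rw [tendsto_iff_dist_tendsto_zero]
  have hC : Filter.Tendsto (fun L : ℕ => γ ^ L * ∑ i, |F i - f i|)
      Filter.atTop (nhds 0) := by
    simpa using (tendsto_pow_atTop_nhds_zero_of_lt_one hγ0.le hγ1).mul_const
      (∑ i, |F i - f i|)
  refine squeeze_zero (fun L => dist_nonneg) (fun L => ?_) hC
  rw [Real.dist_eq, abs_sub_comm]
  calc |F i - (A^[L] f) i| ≤ ∑ j, |F j - (A^[L] f) j| :=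
        Finset.single_le_sum (f := fun j => |F j - (A^[L] f) j|) (fun j _ => abs_nonneg _) (Finset.mem_univ i)
    _ ≤ γ ^ L * ∑ i, |F i - f i| := bound L
end

section
/- Let S be a nonempty finite type, P : Matrix S S ℝ a column-stochastic matrix, γ ∈ (0,1), and r : S → ℝ. Let V := ∑_{t=0}^∞ γ^t (Pᵀ^t).mulVec r and let B v := r + γ • Pᵀ.mulVec v be the backward Bellman operator. Then for every v : S → ℝ and every L ∈ ℕ, max_i |V i − (B^[L] v) i| ≤ γ^L · max_i |V i − v i|; in particular B^[L] v converges to V as L → ∞, for arbitrary initial function v. -/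
/-- Iterating the backward Bellman operator from an arbitrary initial function
converges geometrically (in sup norm) to the value function `V = ∑_t γ^t (Pᵀ)ᵗ r`. -/
theorem backward_bellman_iterates_converge
    {S : Type*} [Fintype S] [Nonempty S] [DecidableEq S]
    (P : Matrix S S ℝ) (hP0 : ∀ i j, 0 ≤ P i j) (hP1 : ∀ j, ∑ i, P i j = 1)
    (γ : ℝ) (hγ : γ ∈ Set.Ioo (0 : ℝ) 1) (r : S → ℝ)
    (V : S → ℝ) (hV : HasSum (fun t : ℕ => γ ^ t • (P.transpose ^ t).mulVec r) V)
    (B : (S → ℝ) → (S → ℝ)) (hB : ∀ v, B v = r + γ • P.transpose.mulVec v) :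
    ∀ v : S → ℝ,
      (∀ L : ℕ,
        Finset.univ.sup' Finset.univ_nonempty (fun i => |V i - (B^[L] v) i|)
          ≤ γ ^ L * Finset.univ.sup' Finset.univ_nonempty (fun i => |V i - v i|)) ∧
      Filter.Tendsto (fun L : ℕ => B^[L] v) Filter.atTop (nhds V) := by
  obtain ⟨hγ0, hγ1⟩ := hγ
  -- the linear map w ↦ γ • Pᵀ.mulVec w, as a continuous linear map
  set Lm : (S → ℝ) →ₗ[ℝ] (S → ℝ) := γ • P.transpose.mulVecLin with hLm
  have hLmapp : ∀ w, Lm w = γ • P.transpose.mulVec w := fun w => rfl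
  have hLc : Continuous Lm := Lm.continuous_of_finiteDimensional
  -- V is a fixed point of B
  have hfix : B V = V := by
    have hshift : HasSum (fun t : ℕ => γ ^ (t + 1) • (P.transpose ^ (t + 1)).mulVec r)
        (Lm V) := by
      have key : ∀ t : ℕ, Lm (γ ^ t • (P.transpose ^ t).mulVec r)
          = γ ^ (t + 1) • (P.transpose ^ (t + 1)).mulVec r := by
        intro t
        rw [hLmapp, Matrix.mulVec_smul, smul_smul, pow_succ' γ, pow_succ' P.transpose,
          Matrix.mulVec_mulVec]
      have h := hV.map Lm.toAddMonoidHom hLc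
      convert h using 1
      exact funext fun t => (key t).symm
      rfl
    have h2 := (hasSum_nat_add_iff (f := fun t : ℕ => γ ^ t • (P.transpose ^ t).mulVec r)
      1).mp hshift
    have h0 : ∑ i ∈ Finset.range 1, γ ^ i • (P.transpose ^ i).mulVec r = r := by simp
    rw [h0] at h2
    have hVeq : V = Lm V + r := (hV.unique h2)
    rw [hLmapp] at hVeq
    rw [hB]
    conv_rhs => rw [hVeq]
    abel
  -- sup' notation
  set M : (S → ℝ) → ℝ := fun w => Finset.univ.sup' Finset.univ_nonempty
    (fun i => |V i - w i|) with hM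
  have hMnn : ∀ w, 0 ≤ M w := by
    intro w
    obtain ⟨i⟩ := ‹Nonempty S›
    exact le_trans (abs_nonneg (V i - w i))
      (Finset.le_sup' (fun i => |V i - w i|) (Finset.mem_univ i))
  -- one-step contraction
  have hstep : ∀ w, M (B w) ≤ γ * M w := by
    intro w
    apply Finset.sup'_le
    intro i _
    have : V i - (B w) i = γ * ∑ j, P j i * (V j - w j) := by
      conv_lhs => rw [← hfix]
      simp only [hB, Pi.add_apply, Pi.smul_apply, smul_eq_mul, Matrix.mulVec,
        dotProduct, Matrix.transpose_apply]
      simp only [mul_sub, Finset.sum_sub_distrib]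
      ring
    rw [this, abs_mul, abs_of_pos hγ0]
    apply mul_le_mul_of_nonneg_left _ hγ0.le
    calc |∑ j, P j i * (V j - w j)| ≤ ∑ j, |P j i * (V j - w j)| :=
          Finset.abs_sum_le_sum_abs _ _
      _ ≤ ∑ j, P j i * M w := by
          apply Finset.sum_le_sum
          intro j _
          rw [abs_mul, abs_of_nonneg (hP0 j i)]
          exact mul_le_mul_of_nonneg_left
            (Finset.le_sup' (fun j => |V j - w j|) (Finset.mem_univ j)) (hP0 j i)
      _ = M w := by rw [← Finset.sum_mul, hP1 i, one_mul]
  intro v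
  have hbound : ∀ L : ℕ, M (B^[L] v) ≤ γ ^ L * M v := by
    intro L
    induction L with
    | zero => simp
    | succ n ih =>
        rw [Function.iterate_succ_apply']
        calc M (B (B^[n] v)) ≤ γ * M (B^[n] v) := hstep _
          _ ≤ γ * (γ ^ n * M v) := by
              exact mul_le_mul_of_nonneg_left ih hγ0.le
          _ = γ ^ (n + 1) * M v := by ring
  refine ⟨hbound, ?_⟩
  rw [tendsto_pi_nhds]
  intro i
  rw [tendsto_iff_dist_tendsto_zero]
  have hsq : ∀ L : ℕ, dist ((B^[L] v) i) (V i) ≤ γ ^ L * M v := by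
    intro L
    rw [Real.dist_eq, abs_sub_comm]
    exact le_trans (Finset.le_sup' (fun i => |V i - B^[L] v i|) (Finset.mem_univ i))
      (hbound L)
  have hlim : Filter.Tendsto (fun L : ℕ => γ ^ L * M v) Filter.atTop (nhds 0) := by
    have := tendsto_pow_atTop_nhds_zero_of_lt_one hγ0.le hγ1
    simpa using this.mul_const (M v)
  exact squeeze_zero (fun L => dist_nonneg) hsq hlim
end

section
/- Let S be a nonempty finite type, P : Matrix S S ℝ a column-stochastic matrix, γ ∈ (0,1), and let p₀ : S → ℝ be a probability vector (entries nonnegative, summing to 1). Let A f := p₀ + γ • P.mulVec f. Then for every L ≥ 1, ∑_i |(A^[L] p₀) i − (A^[L−1] p₀) i| ≤ γ^L. -/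
lemma mulVec_l1_contract {S : Type*} [Fintype S]
    (P : Matrix S S ℝ) (hP0 : ∀ i j, 0 ≤ P i j) (hP1 : ∀ j, ∑ i, P i j = 1)
    (v : S → ℝ) : ∑ i, |P.mulVec v i| ≤ ∑ j, |v j| := by
  calc ∑ i, |P.mulVec v i| ≤ ∑ i, ∑ j, P i j * |v j| := by
        apply Finset.sum_le_sum
        intro i _
        calc |P.mulVec v i| = |∑ j, P i j * v j| := rfl
          _ ≤ ∑ j, |P i j * v j| := Finset.abs_sum_le_sum_abs _ _
          _ = ∑ j, P i j * |v j| := by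
              refine Finset.sum_congr rfl fun j _ => ?_
              rw [abs_mul, abs_of_nonneg (hP0 i j)]
    _ = ∑ j, (∑ i, P i j) * |v j| := by
        rw [Finset.sum_comm]
        simp [Finset.sum_mul]
    _ = ∑ j, |v j| := by simp [hP1]

/-- When the forward Bellman iteration is initialized at the initial distribution `p₀`,
consecutive iterates differ by at most `γ^L` in ℓ1 norm. -/
theorem forward_bellman_iterate_difference_bound
    {S : Type*} [Fintype S] [Nonempty S]
    (P : Matrix S S ℝ) (hP0 : ∀ i j, 0 ≤ P i j) (hP1 : ∀ j, ∑ i, P i j = 1)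
    (γ : ℝ) (hγ : γ ∈ Set.Ioo (0 : ℝ) 1)
    (p₀ : S → ℝ) (hp0 : ∀ i, 0 ≤ p₀ i) (hp1 : ∑ i, p₀ i = 1)
    (A : (S → ℝ) → (S → ℝ)) (hA : ∀ f, A f = p₀ + γ • P.mulVec f) :
    ∀ L : ℕ, 1 ≤ L → ∑ i, |(A^[L] p₀) i - (A^[L - 1] p₀) i| ≤ γ ^ L := by
  obtain ⟨hγ0, hγ1⟩ := hγ
  have key : ∀ f g : S → ℝ,
      ∑ i, |(A f) i - (A g) i| ≤ γ * ∑ i, |f i - g i| := by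
    intro f g
    have : ∀ i, (A f) i - (A g) i = γ * P.mulVec (f - g) i := by
      intro i
      simp [hA, Matrix.mulVec_sub, mul_sub]
    calc ∑ i, |(A f) i - (A g) i| = ∑ i, γ * |P.mulVec (f - g) i| := by
          refine Finset.sum_congr rfl fun i _ => ?_
          rw [this i, abs_mul, abs_of_nonneg hγ0.le]
      _ = γ * ∑ i, |P.mulVec (f - g) i| := by rw [Finset.mul_sum]
      _ ≤ γ * ∑ i, |f i - g i| := by
          apply mul_le_mul_of_nonneg_left _ hγ0.le
          simpa using mulVec_l1_contract P hP0 hP1 (f - g)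
  intro L hL
  induction L with
  | zero => omega
  | succ n ih =>
    rcases Nat.eq_or_lt_of_le hL with h1 | h1
    · -- n = 0, L = 1
      have hn : n = 0 := by omega
      subst hn
      norm_num [Function.iterate_one, Function.iterate_zero]
      have : ∀ i, (A p₀) i - p₀ i = γ * P.mulVec p₀ i := by
        intro i
        simp only [hA, Pi.add_apply, Pi.smul_apply, smul_eq_mul]
        ring
      calc ∑ i, |(A p₀) i - p₀ i| = ∑ i, γ * |P.mulVec p₀ i| := by
            refine Finset.sum_congr rfl fun i _ => ?_
            rw [this i, abs_mul, abs_of_nonneg hγ0.le]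
        _ = γ * ∑ i, |P.mulVec p₀ i| := by rw [Finset.mul_sum]
        _ ≤ γ * ∑ i, |p₀ i| := by
            exact mul_le_mul_of_nonneg_left (mulVec_l1_contract P hP0 hP1 p₀) hγ0.le
        _ = γ := by
            have : ∑ i, |p₀ i| = 1 := by
              rw [← hp1]; exact Finset.sum_congr rfl fun i _ => abs_of_nonneg (hp0 i)
            rw [this, mul_one]
    · have hn : 1 ≤ n := by omega
      have h1' : A^[n + 1] p₀ = A (A^[n] p₀) := Function.iterate_succ_apply' A n p₀
      have h2' : A^[n + 1 - 1] p₀ = A (A^[n - 1] p₀) := by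
        have : n + 1 - 1 = (n - 1) + 1 := by omega
        rw [this, Function.iterate_succ_apply' A (n-1) p₀]
      rw [h1', h2']
      calc ∑ i, |(A (A^[n] p₀)) i - (A (A^[n-1] p₀)) i|
          ≤ γ * ∑ i, |(A^[n] p₀) i - (A^[n-1] p₀) i| := key _ _
        _ ≤ γ * γ ^ n := mul_le_mul_of_nonneg_left (ih hn) hγ0.le
        _ = γ ^ (n + 1) := (pow_succ' γ n).symm
end

section
/- Let S be a nonempty finite type, P : Matrix S S ℝ a column-stochastic matrix, γ ∈ (0,1), and let r : S → ℝ satisfy 0 ≤ r i ≤ 1 for all i. Let B v := r + γ • Pᵀ.mulVec v. Then for every L ≥ 1, max_i |(B^[L] r) i − (B^[L−1] r) i| ≤ γ^L. -/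
/-- When the backward Bellman iteration is initialized at the normalized reward `r`,
consecutive iterates differ by at most `γ^L` in sup norm. -/
theorem backward_bellman_iterate_difference_bound
    {S : Type*} [Fintype S] [Nonempty S]
    (P : Matrix S S ℝ) (hP0 : ∀ i j, 0 ≤ P i j) (hP1 : ∀ j, ∑ i, P i j = 1)
    (γ : ℝ) (hγ : γ ∈ Set.Ioo (0 : ℝ) 1)
    (r : S → ℝ) (hr : ∀ i, 0 ≤ r i ∧ r i ≤ 1)
    (B : (S → ℝ) → (S → ℝ)) (hB : ∀ v, B v = r + γ • P.transpose.mulVec v) :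
    ∀ L : ℕ, 1 ≤ L →
      Finset.univ.sup' Finset.univ_nonempty (fun i => |(B^[L] r) i - (B^[L - 1] r) i|)
        ≤ γ ^ L := by
  obtain ⟨hγ0, hγ1⟩ := hγ
  have key : ∀ (x : S → ℝ) (M : ℝ), (∀ j, |x j| ≤ M) →
      ∀ i, |(P.transpose.mulVec x) i| ≤ M := by
    intro x M hM i
    have h1 : |(P.transpose.mulVec x) i| ≤ ∑ j, P j i * |x j| := by
      rw [Matrix.mulVec, dotProduct]
      refine (Finset.abs_sum_le_sum_abs _ _).trans ?_
      refine Finset.sum_le_sum fun j _ => ?_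
      rw [abs_mul, Matrix.transpose_apply, abs_of_nonneg (hP0 j i)]
    refine h1.trans ?_
    calc ∑ j, P j i * |x j| ≤ ∑ j, P j i * M :=
          Finset.sum_le_sum fun j _ => mul_le_mul_of_nonneg_left (hM j) (hP0 j i)
      _ = M := by rw [← Finset.sum_mul, hP1 i, one_mul]
  have main : ∀ k, ∀ i, |(B^[k+1] r) i - (B^[k] r) i| ≤ γ ^ (k+1) := by
    intro k
    induction k with
    | zero =>
      intro i
      have : B^[1] r i - B^[0] r i = γ * (P.transpose.mulVec r) i := by
        simp [hB]
      rw [this, abs_mul, abs_of_nonneg hγ0.le, pow_one]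
      have hb : ∀ j, |r j| ≤ 1 := fun j => abs_le.2 ⟨by linarith [(hr j).1], (hr j).2⟩
      have := key r 1 hb i
      nlinarith
    | succ n ih =>
      intro i
      have hdiff : B^[n+2] r i - B^[n+1] r i
          = γ * (P.transpose.mulVec (B^[n+1] r - B^[n] r)) i := by
        have e1 : B^[n+2] r = B (B^[n+1] r) := Function.iterate_succ_apply' B (n+1) r
        have e2 : B^[n+1] r = B (B^[n] r) := Function.iterate_succ_apply' B n r
        rw [e1]
        nth_rewrite 2 [e2]
        rw [hB, hB, Matrix.mulVec_sub]
        simp only [Pi.add_apply, Pi.smul_apply, Pi.sub_apply, smul_eq_mul]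
        ring
      rw [hdiff, abs_mul, abs_of_nonneg hγ0.le]
      have hb : ∀ j, |(B^[n+1] r - B^[n] r) j| ≤ γ ^ (n+1) := by
        intro j; simpa using ih j
      have := key _ _ hb i
      calc γ * |(P.transpose.mulVec (B^[n+1] r - B^[n] r)) i|
          ≤ γ * γ ^ (n+1) := by nlinarith
        _ = γ ^ (n+2) := by ring
  intro L hL
  obtain ⟨k, rfl⟩ : ∃ k, L = k + 1 := ⟨L - 1, (Nat.succ_pred_eq_of_pos hL).symm⟩
  refine Finset.sup'_le _ _ fun i _ => ?_
  simpa using main k i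
end

section
/- Let S be a nonempty finite type, P : Matrix S S ℝ a column-stochastic matrix, γ ∈ (0,1), ε > 0, and let p₀ : S → ℝ be a probability vector (entries nonnegative, summing to 1). Let A f := p₀ + γ • P.mulVec f and F := ∑_{t=0}^∞ γ^t (P^t).mulVec p₀. If L ∈ ℕ satisfies γ^L < ((1−γ)/γ) ε, then max_i |F i − (A^[L] p₀) i| < ε + γ^L; more precisely, ∑_i |F i − (A^[L] p₀) i| ≤ γ^{L+1}/(1−γ), so if in addition L > log((1−γ)ε)/log(γ) − 1 then max_i |F i − (A^[L] p₀) i| < ε. -/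
/-- Guarantee `L_max ≤ T_max` for MBEM initialized at `p₀`: the error of the `L`-th
forward Bellman iterate is at most `γ^{L+1}/(1-γ)`, hence smaller than `ε` (plus `γ^L`)
under the respective conditions on `L`. -/
theorem mbem_forward_error_guarantee
    {S : Type*} [Fintype S] [Nonempty S] [DecidableEq S]
    (P : Matrix S S ℝ) (hP0 : ∀ i j, 0 ≤ P i j) (hP1 : ∀ j, ∑ i, P i j = 1)
    (γ : ℝ) (hγ : γ ∈ Set.Ioo (0 : ℝ) 1) (ε : ℝ) (hε : 0 < ε)
    (p₀ : S → ℝ) (hp0 : ∀ i, 0 ≤ p₀ i) (hp1 : ∑ i, p₀ i = 1)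
    (A : (S → ℝ) → (S → ℝ)) (hA : ∀ f, A f = p₀ + γ • P.mulVec f)
    (F : S → ℝ) (hF : HasSum (fun t : ℕ => γ ^ t • (P ^ t).mulVec p₀) F) :
    ∀ L : ℕ,
      (γ ^ L < ((1 - γ) / γ) * ε →
        Finset.univ.sup' Finset.univ_nonempty (fun i => |F i - (A^[L] p₀) i|)
          < ε + γ ^ L) ∧
      (∑ i, |F i - (A^[L] p₀) i| ≤ γ ^ (L + 1) / (1 - γ)) ∧
      ((L : ℝ) > Real.log ((1 - γ) * ε) / Real.log γ - 1 →
        Finset.univ.sup' Finset.univ_nonempty (fun i => |F i - (A^[L] p₀) i|) < ε) := by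
  obtain ⟨hγ0, hγ1⟩ := hγ
  have h1γ : (0:ℝ) < 1 - γ := by linarith
  -- powers of P are column stochastic
  have hpow : ∀ t : ℕ, (∀ i j, 0 ≤ (P^t) i j) ∧ (∀ j, ∑ i, (P^t) i j = 1) := by
    intro t
    induction t with
    | zero =>
      constructor
      · intro i j; simp [Matrix.one_apply]; positivity
      · intro j; simp [Matrix.one_apply]
    | succ t ih =>
      constructor
      · intro i j
        rw [pow_succ, Matrix.mul_apply]
        exact Finset.sum_nonneg fun k _ => mul_nonneg (ih.1 i k) (hP0 k j)
      · intro j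
        rw [pow_succ]
        simp only [Matrix.mul_apply]
        rw [Finset.sum_comm]
        have : ∀ k, ∑ i, (P^t) i k * P k j = P k j := by
          intro k; rw [← Finset.sum_mul, ih.2 k, one_mul]
        simp_rw [this]
        exact hP1 j
  set v : ℕ → S → ℝ := fun t => (P^t).mulVec p₀ with hv
  have hv0 : ∀ t i, 0 ≤ v t i := by
    intro t i
    exact Finset.sum_nonneg fun j _ => mul_nonneg ((hpow t).1 i j) (hp0 j)
  have hv1 : ∀ t, ∑ i, v t i = 1 := by
    intro t
    simp only [hv, Matrix.mulVec, dotProduct]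
    rw [Finset.sum_comm]
    have : ∀ j, ∑ i, (P^t) i j * p₀ j = p₀ j := by
      intro j; rw [← Finset.sum_mul, (hpow t).2 j, one_mul]
    simp_rw [this]
    exact hp1
  have hiter : ∀ L : ℕ, A^[L] p₀ = ∑ t ∈ Finset.range (L+1), γ^t • v t := by
    intro L
    induction L with
    | zero => simp [hv, Matrix.one_mulVec]
    | succ L ih =>
      rw [Function.iterate_succ_apply', ih, hA]
      have hmv : P.mulVec (∑ t ∈ Finset.range (L+1), γ^t • v t)
          = ∑ t ∈ Finset.range (L+1), γ^t • P.mulVec (v t) := by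
        rw [← Matrix.mulVecLin_apply, map_sum]
        simp [Matrix.mulVecLin_apply]
      rw [hmv, Finset.sum_range_succ' _ (L+1)]
      have h0 : γ^0 • v 0 = p₀ := by simp [hv, Matrix.one_mulVec]
      rw [h0, Finset.smul_sum, add_comm]
      congr 1
      apply Finset.sum_congr rfl
      intro t _
      rw [smul_smul, ← pow_succ']
      congr 1
      simp only [hv, Matrix.mulVec_mulVec, ← pow_succ']
  have hFi : ∀ i, HasSum (fun t => γ^t * v t i) (F i) := by
    intro i
    have := Pi.hasSum.mp hF i
    simpa using this
  intro L
  -- the L-th iterate evaluated at i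
  have hAi : ∀ i, (A^[L] p₀) i = ∑ t ∈ Finset.range (L+1), γ^t * v t i := by
    intro i
    rw [hiter L]
    simp [Finset.sum_apply]
  have htail : ∀ i, HasSum (fun n => γ^(n+(L+1)) * v (n+(L+1)) i)
      (F i - ∑ t ∈ Finset.range (L+1), γ^t * v t i) := by
    intro i
    refine (hasSum_nat_add_iff (f := fun t => γ^t * v t i) (L+1)).mpr ?_
    have heq : F i - ∑ t ∈ Finset.range (L+1), γ^t * v t i
        + ∑ t ∈ Finset.range (L+1), γ^t * v t i = F i := by ring
    rw [heq]
    exact hFi i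
  have hdiff : ∀ i, 0 ≤ F i - (A^[L] p₀) i := by
    intro i
    rw [hAi i]
    exact hasSum_le (fun n => mul_nonneg (by positivity) (hv0 _ i)) hasSum_zero (htail i)
  have hsumF : ∑ i, F i = (1-γ)⁻¹ := by
    have h1 : HasSum (fun t : ℕ => ∑ i, γ^t * v t i) (∑ i, F i) :=
      hasSum_sum fun i _ => hFi i
    have h2 : ∀ t : ℕ, ∑ i, γ^t * v t i = γ^t := by
      intro t; rw [← Finset.mul_sum, hv1 t, mul_one]
    simp_rw [h2] at h1
    exact h1.unique (hasSum_geometric_of_lt_one hγ0.le hγ1)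
  have hl1 : ∑ i, |F i - (A^[L] p₀) i| = γ^(L+1)/(1-γ) := by
    have : ∑ i, |F i - (A^[L] p₀) i| = ∑ i, (F i - (A^[L] p₀) i) :=
      Finset.sum_congr rfl fun i _ => abs_of_nonneg (hdiff i)
    rw [this, Finset.sum_sub_distrib, hsumF]
    have : ∑ i, (A^[L] p₀) i = ∑ t ∈ Finset.range (L+1), γ^t := by
      simp_rw [hAi]
      rw [Finset.sum_comm]
      exact Finset.sum_congr rfl fun t _ => by rw [← Finset.mul_sum, hv1 t, mul_one]
    rw [this, geom_sum_eq (by linarith : γ ≠ 1)]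
    rw [show γ - 1 = -(1-γ) by ring, show γ^(L+1) - 1 = -(1 - γ^(L+1)) by ring,
      neg_div_neg_eq, inv_eq_one_div, div_sub_div_same]
    congr 1
    ring
  have hsup_le : Finset.univ.sup' Finset.univ_nonempty (fun i => |F i - (A^[L] p₀) i|)
      ≤ γ^(L+1)/(1-γ) := by
    apply Finset.sup'_le
    intro i _
    rw [← hl1]
    exact Finset.single_le_sum (f := fun j => |F j - (A^[L] p₀) j|)
      (fun j _ => abs_nonneg _) (Finset.mem_univ i)
  have hkey : ∀ (h : γ^(L+1) < (1-γ)*ε),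
      Finset.univ.sup' Finset.univ_nonempty (fun i => |F i - (A^[L] p₀) i|) < ε := by
    intro h
    refine lt_of_le_of_lt hsup_le ?_
    rw [div_lt_iff₀ h1γ]
    linarith [h]
  refine ⟨?_, ?_, ?_⟩
  · intro h
    have h' : γ^(L+1) < (1-γ)*ε := by
      have := mul_lt_mul_of_pos_right h hγ0
      rw [pow_succ]
      calc γ^L * γ < ((1-γ)/γ * ε) * γ := this
        _ = (1-γ)*ε := by field_simp
    have := hkey h'
    have hγL : (0:ℝ) < γ^L := by positivity
    linarith
  · rw [hl1]
  · intro h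
    have hlogγ : Real.log γ < 0 := Real.log_neg hγ0 hγ1
    have hεγ : (0:ℝ) < (1-γ)*ε := by positivity
    have h1 : ((L:ℝ)+1) * Real.log γ < Real.log ((1-γ)*ε) := by
      have h2 : Real.log ((1-γ)*ε) / Real.log γ < (L:ℝ)+1 := by linarith
      have := mul_lt_mul_of_neg_right h2 hlogγ
      rwa [div_mul_cancel₀ _ (ne_of_lt hlogγ)] at this
    have h3 : γ^(L+1) < (1-γ)*ε := by
      rw [← Real.log_lt_log_iff (by positivity) hεγ, Real.log_pow]
      push_cast
      exact h1
    exact hkey h3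
end
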